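/- arXiv:1303.6695 — 2 statements merged into one kernel-verified Lean document; each statement's English description precedes it below -/
import Mathlib

section
/- Let β > 0, γ > 0, δ > 0, w ∈ ℝ and z > 0 with |w| < z^β. Then ∫_0^∞ e^{−zt} t^{γ−1} E_{β,γ}^δ(w t^β) dt = z^{βδ−γ}/(z^β − w)^δ. -/
open MeasureTheory Real Filter Set

/-- Generalized (three-parameter) Mittag--Leffler function
`E_{β,γ}^δ(w) = ∑_{r≥0} Γ(δ+r) w^r / (r! Γ(βr+γ) Γ(δ))`.
The convention `1/Γ(x) = 0` at nonpositive integers is automatic since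
`Real.Gamma` vanishes there and division by zero is zero. -/
noncomputable def mlGen (β γ δ : ℝ) (w : ℝ) : ℝ :=
  ∑' r : ℕ, (Real.Gamma (δ + (r : ℝ)) * w ^ r) /
    ((r.factorial : ℝ) * Real.Gamma (β * (r : ℝ) + γ) * Real.Gamma δ)


open Topology


lemma exp_tsum' (y : ℝ) : ∑' n : ℕ, y ^ n / (n.factorial : ℝ) = Real.exp y := by
  rw [Real.exp_eq_exp_ℝ, NormedSpace.exp_eq_tsum_div]

lemma gammaSummable {δ x : ℝ} (hδ : 0 < δ) (hx : |x| < 1) :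
    Summable (fun r : ℕ => Real.Gamma (δ + r) * x ^ r / (r.factorial : ℝ)) := by
  set l : ℝ := (|x| + 1) / 2 with hl
  have hxl : |x| < l := by rw [hl]; linarith
  have hl1 : l < 1 := by rw [hl]; linarith
  apply summable_of_ratio_norm_eventually_le hl1
  have hten : Tendsto (fun r : ℕ => (δ + r) / (r + 1) * |x|) atTop (𝓝 (1 * |x|)) := by
    apply Tendsto.mul_const
    have h0 : Tendsto (fun r : ℕ => 1 + (δ - 1) * (1 / (r + 1))) atTop (𝓝 (1 + (δ - 1) * 0)) :=
      tendsto_const_nhds.add (tendsto_const_nhds.mul tendsto_one_div_add_atTop_nhds_zero_nat)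
    rw [mul_zero, add_zero] at h0
    apply h0.congr
    intro r
    have hr1 : (0:ℝ) < (r:ℝ) + 1 := by positivity
    field_simp
    ring
  rw [one_mul] at hten
  filter_upwards [hten.eventually_le_const hxl] with r hr
  have hpos : (0:ℝ) < δ + r := by positivity
  have hΓpos : 0 < Real.Gamma (δ + r) := Real.Gamma_pos_of_pos hpos
  have hfact : (0:ℝ) < (r.factorial : ℝ) := by positivity
  have hG : Real.Gamma (δ + (r + 1 : ℕ)) = (δ + r) * Real.Gamma (δ + r) := by
    push_cast
    rw [show δ + ((r:ℝ) + 1) = (δ + r) + 1 by ring, Real.Gamma_add_one hpos.ne']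
  rw [hG]
  have hfact1 : ((r + 1).factorial : ℝ) = ((r:ℝ) + 1) * (r.factorial : ℝ) := by
    rw [Nat.factorial_succ]; push_cast; ring
  rw [hfact1]
  have : ‖(δ + r) * Real.Gamma (δ + ↑r) * x ^ (r + 1) / (((r:ℝ) + 1) * ↑r.factorial)‖
      = ((δ + r) / (r + 1) * |x|) * ‖Real.Gamma (δ + ↑r) * x ^ r / ↑r.factorial‖ := by
    simp only [norm_div, norm_mul, Real.norm_eq_abs, abs_pow]
    rw [abs_of_pos hΓpos, abs_of_pos hpos, abs_of_pos hfact, abs_of_pos (by positivity : (0:ℝ) < (r:ℝ)+1)]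
    field_simp
    ring
  rw [this]
  have hnn : (0:ℝ) ≤ ‖Real.Gamma (δ + ↑r) * x ^ r / ↑r.factorial‖ := norm_nonneg _
  exact mul_le_mul_of_nonneg_right hr hnn


lemma intOn_exp {s z : ℝ} (hs : 0 < s) (hz : 0 < z) :
    IntegrableOn (fun t : ℝ => Real.exp (-(z * t)) * t ^ (s - 1)) (Ioi 0) := by
  have h := integrableOn_rpow_mul_exp_neg_mul_rpow (p := 1) (s := s - 1) (b := z)
    (by linarith) one_pos hz
  simpa [Real.rpow_one, mul_comm] using h

lemma gamma_int {s z : ℝ} (hs : 0 < s) (hz : 0 < z) :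
    ∫ t in Ioi (0:ℝ), Real.exp (-(z * t)) * t ^ (s - 1) = Real.Gamma s * z ^ (-s) := by
  have h := Real.integral_rpow_mul_exp_neg_mul_Ioi hs hz
  have e : (1 / z) ^ s = z ^ (-s) := by
    rw [one_div, ← Real.rpow_neg_one, ← Real.rpow_mul hz.le, neg_one_mul]
  rw [e] at h
  rw [show (∫ t in Ioi (0:ℝ), Real.exp (-(z * t)) * t ^ (s - 1))
      = ∫ t : ℝ in Ioi 0, t ^ (s - 1) * Real.exp (-(z * t)) by
    congr 1; ext t; ring, h, mul_comm]




lemma binom {δ x : ℝ} (hδ : 0 < δ) (hx : |x| < 1) :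
    ∑' r : ℕ, Real.Gamma (δ + r) * x ^ r / (r.factorial : ℝ)
      = Real.Gamma δ * (1 - x) ^ (-δ) := by
  set F : ℕ → ℝ → ℝ := fun r t => (x ^ r / (r.factorial : ℝ)) *
    (Real.exp (-(1 * t)) * t ^ (δ + r - 1)) with hF
  have hsr : ∀ r : ℕ, (0:ℝ) < δ + r := fun r => by positivity
  have hF_int : ∀ r : ℕ, IntegrableOn (F r) (Ioi 0) := fun r =>
    (intOn_exp (hsr r) one_pos).const_mul _
  have hnorm : ∀ r : ℕ, (∫ t in Ioi (0:ℝ), ‖F r t‖)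
      = Real.Gamma (δ + r) * |x| ^ r / (r.factorial : ℝ) := by
    intro r
    have : ∀ t ∈ Ioi (0:ℝ), ‖F r t‖
        = (|x| ^ r / (r.factorial : ℝ)) * (Real.exp (-(1 * t)) * t ^ (δ + r - 1)) := by
      intro t ht
      rw [hF]
      simp only [norm_mul, norm_div, Real.norm_eq_abs, abs_pow]
      rw [abs_of_nonneg (by positivity : (0:ℝ) ≤ (r.factorial:ℝ)), abs_of_pos (Real.exp_pos _),
        abs_of_pos (Real.rpow_pos_of_pos ht _)]
    rw [setIntegral_congr_fun measurableSet_Ioi this, integral_const_mul,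
      gamma_int (hsr r) one_pos, Real.one_rpow]
    ring
  have hF_sum : Summable fun r : ℕ => ∫ t in Ioi (0:ℝ), ‖F r t‖ := by
    simp_rw [hnorm]
    exact gammaSummable hδ (by rwa [abs_abs])
  have hswap := integral_tsum_of_summable_integral_norm hF_int hF_sum
  have hterm : ∀ r : ℕ, (∫ t in Ioi (0:ℝ), F r t)
      = Real.Gamma (δ + r) * x ^ r / (r.factorial : ℝ) := by
    intro r
    rw [hF]
    simp only
    rw [integral_const_mul, gamma_int (hsr r) one_pos, Real.one_rpow]
    ring
  have hlhs : ∑' r : ℕ, Real.Gamma (δ + r) * x ^ r / (r.factorial : ℝ)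
      = ∑' r : ℕ, ∫ t in Ioi (0:ℝ), F r t := by
    exact tsum_congr fun r => (hterm r).symm
  rw [hlhs, hswap]
  have h1x : (0:ℝ) < 1 - x := by
    have := abs_lt.mp hx; linarith [this.2]
  have hinner : ∀ t ∈ Ioi (0:ℝ), (∑' r : ℕ, F r t)
      = Real.exp (-((1 - x) * t)) * t ^ (δ - 1) := by
    intro t ht
    have hrw : ∀ r : ℕ, F r t = (Real.exp (-(1 * t)) * t ^ (δ - 1)) * ((x * t) ^ r / (r.factorial : ℝ)) := by
      intro r
      rw [hF]
      simp only
      rw [show δ + (r:ℝ) - 1 = (δ - 1) + (r:ℝ) by ring, Real.rpow_add ht,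
        Real.rpow_natCast, mul_pow]
      ring
    rw [tsum_congr hrw, tsum_mul_left, exp_tsum']
    rw [one_mul]
    rw [show rexp (-t) * t ^ (δ - 1) * rexp (x * t) = rexp (-t) * rexp (x*t) * t ^ (δ-1) by ring,
      ← Real.exp_add, show -t + x*t = -((1-x)*t) by ring]
  rw [setIntegral_congr_fun measurableSet_Ioi hinner, gamma_int hδ h1x]

/-- Laplace transform of `t^{γ−1} E_{β,γ}^δ(w t^β)`:
`∫_0^∞ e^{−zt} t^{γ−1} E_{β,γ}^δ(w t^β) dt = z^{βδ−γ}/(z^β − w)^δ`. -/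
theorem stmt_1 (β γ δ w z : ℝ) (hβ : 0 < β) (hγ : 0 < γ) (hδ : 0 < δ)
    (hz : 0 < z) (hw : |w| < z ^ β) :
    ∫ t in Set.Ioi (0 : ℝ), Real.exp (-z * t) * t ^ (γ - 1) * mlGen β γ δ (w * t ^ β)
      = z ^ (β * δ - γ) / (z ^ β - w) ^ δ := by
  have hzb : (0:ℝ) < z ^ β := Real.rpow_pos_of_pos hz β
  have hzw : (0:ℝ) < z ^ β - w := by
    have := (abs_lt.mp hw).2; have := neg_abs_le w; linarith [(abs_lt.mp hw).1]
  have hΓδ : (0:ℝ) < Real.Gamma δ := Real.Gamma_pos_of_pos hδ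
  have hs : ∀ r : ℕ, (0:ℝ) < β * r + γ := fun r => by positivity
  have hΓs : ∀ r : ℕ, (0:ℝ) < Real.Gamma (β * r + γ) := fun r => Real.Gamma_pos_of_pos (hs r)
  set F : ℕ → ℝ → ℝ := fun r t =>
    (Real.Gamma (δ + r) * w ^ r / ((r.factorial : ℝ) * Real.Gamma (β * r + γ) * Real.Gamma δ)) *
    (Real.exp (-(z * t)) * t ^ (β * r + γ - 1)) with hFdef
  have hF_int : ∀ r : ℕ, IntegrableOn (F r) (Ioi 0) := fun r =>
    (intOn_exp (hs r) hz).const_mul _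
  -- z-power splitting
  have hzr : ∀ r : ℕ, z ^ (-(β * r + γ)) = z ^ (-γ) * (z ^ (-β)) ^ r := by
    intro r
    rw [← Real.rpow_natCast (z ^ (-β)) r, ← Real.rpow_mul hz.le, ← Real.rpow_add hz]
    ring_nf
  -- the small parameter
  have hxabs : |w| * z ^ (-β) < 1 := by
    rw [Real.rpow_neg hz.le, ← div_eq_mul_inv, div_lt_one hzb]; exact hw
  have hxnn : (0:ℝ) ≤ |w| * z ^ (-β) := by positivity
  -- term values
  have hterm : ∀ r : ℕ, (∫ t in Ioi (0:ℝ), F r t)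
      = (z ^ (-γ) / Real.Gamma δ) * (Real.Gamma (δ + r) * (w * z ^ (-β)) ^ r / (r.factorial : ℝ)) := by
    intro r
    rw [hFdef]
    simp only
    rw [integral_const_mul, gamma_int (hs r) hz, hzr r, mul_pow]
    have h1 : (r.factorial : ℝ) ≠ 0 := by positivity
    field_simp
  have hnorm : ∀ r : ℕ, (∫ t in Ioi (0:ℝ), ‖F r t‖)
      = (z ^ (-γ) / Real.Gamma δ) * (Real.Gamma (δ + r) * (|w| * z ^ (-β)) ^ r / (r.factorial : ℝ)) := by
    intro r
    have hc : ∀ t ∈ Ioi (0:ℝ), ‖F r t‖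
        = (Real.Gamma (δ + r) * |w| ^ r / ((r.factorial : ℝ) * Real.Gamma (β * r + γ) * Real.Gamma δ)) *
          (Real.exp (-(z * t)) * t ^ (β * r + γ - 1)) := by
      intro t ht
      rw [hFdef]
      simp only [norm_mul, norm_div, Real.norm_eq_abs, abs_pow]
      rw [abs_of_pos (Real.Gamma_pos_of_pos (by positivity : (0:ℝ) < δ + r)),
        abs_of_pos (Real.exp_pos _), abs_of_pos (Real.rpow_pos_of_pos ht _),
        abs_of_pos hΓδ, abs_of_pos (hΓs r),
        abs_of_nonneg (by positivity : (0:ℝ) ≤ (r.factorial : ℝ))]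
    rw [setIntegral_congr_fun measurableSet_Ioi hc, integral_const_mul,
      gamma_int (hs r) hz, hzr r, mul_pow]
    have h1 : (r.factorial : ℝ) ≠ 0 := by positivity
    field_simp
  have hF_sum : Summable fun r : ℕ => ∫ t in Ioi (0:ℝ), ‖F r t‖ := by
    simp_rw [hnorm]
    exact (gammaSummable hδ (by rwa [abs_of_nonneg hxnn])).mul_left _
  have hswap := integral_tsum_of_summable_integral_norm hF_int hF_sum
  -- identify the integrand with the tsum
  have hinner : ∀ t ∈ Ioi (0:ℝ),
      Real.exp (-z * t) * t ^ (γ - 1) * mlGen β γ δ (w * t ^ β) = ∑' r : ℕ, F r t := by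
    intro t ht
    have htr : ∀ r : ℕ, F r t = (Real.exp (-(z * t)) * t ^ (γ - 1)) *
        (Real.Gamma (δ + r) * (w * t ^ β) ^ r /
          ((r.factorial : ℝ) * Real.Gamma (β * r + γ) * Real.Gamma δ)) := by
      intro r
      rw [hFdef]
      simp only
      rw [show β * r + γ - 1 = (γ - 1) + β * r by ring, Real.rpow_add ht,
        mul_pow, ← Real.rpow_natCast (t ^ β) r, ← Real.rpow_mul ht.le]
      ring
    rw [tsum_congr htr, tsum_mul_left, mlGen, neg_mul]
  have hx2 : |w * z ^ (-β)| < 1 := by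
    rwa [abs_mul, abs_of_pos (Real.rpow_pos_of_pos hz _)]
  rw [setIntegral_congr_fun measurableSet_Ioi hinner, ← hswap, tsum_congr hterm,
    tsum_mul_left, binom hδ hx2]
  -- final algebra
  have h1 : 1 - w * z ^ (-β) = (z ^ β - w) / z ^ β := by
    rw [Real.rpow_neg hz.le]
    field_simp
  rw [h1, Real.div_rpow hzw.le hzb.le, Real.rpow_neg hzw.le, Real.rpow_neg hzb.le,
    ← Real.rpow_mul hz.le]
  rw [Real.rpow_neg hz.le γ]
  rw [show z ^ (β * δ - γ) = z ^ (β * δ) * z ^ (-γ) by rw [← Real.rpow_add hz]; ring_nf]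
  have hβδ : z ^ (β * δ) ≠ 0 := by positivity
  have hzwδ : (z ^ β - w) ^ δ ≠ 0 := by positivity
  have hzg : z ^ (-γ) * z ^ γ = 1 := by
    rw [← Real.rpow_add hz]; simp
  field_simp
  linear_combination (-1) * hzg
end

section
/- Let θ > 0, α ∈ (0,1) and t > 0. Then the function t ↦ E_{α,1}(−θ t^α) is differentiable at t with derivative d/dt E_{α,1}(−θ t^α) = −θ t^{α−1} E_{α,α}(−θ t^α). -/
open MeasureTheory Real Filter Set

lemma gammaA {α : ℝ} (hα0 : 0 < α) (hα1 : α < 1) {x : ℝ} (hx : 0 < x) :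
    x * Real.Gamma x ≤ Real.Gamma (x + α) * (x + α) ^ (1 - α) := by
  have hxa : 0 < x + α := by linarith
  have h := Real.Gamma_mul_add_mul_le_rpow_Gamma_mul_rpow_Gamma (a := α) (b := 1 - α)
    (s := x + α) (t := x + α + 1) hxa (by linarith) hα0 (by linarith) (by ring)
  have e1 : α * (x + α) + (1 - α) * (x + α + 1) = x + 1 := by ring
  rw [e1, Real.Gamma_add_one (ne_of_gt hx), Real.Gamma_add_one (ne_of_gt hxa)] at h
  have hΓ : 0 < Real.Gamma (x + α) := Real.Gamma_pos_of_pos hxa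
  calc x * Real.Gamma x ≤ Real.Gamma (x + α) ^ α * ((x + α) * Real.Gamma (x + α)) ^ (1 - α) := h
    _ = Real.Gamma (x + α) * (x + α) ^ (1 - α) := by
        rw [Real.mul_rpow hxa.le hΓ.le, ← mul_assoc, mul_comm (Real.Gamma (x+α) ^ α),
          mul_assoc, ← Real.rpow_add hΓ]
        norm_num [mul_comm]

/-- Eventual inequality used in the ratio test. -/
lemma Eineq {α q : ℝ} (hα0 : 0 < α) (hα1 : α < 1) (hq : 0 < q) :
    ∀ᶠ r : ℕ in atTop, q * ((r : ℝ) + 2) * (α * r + 1 + α) ^ (1 - α)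
      ≤ (1 / 2) * ((r : ℝ) + 1) * (α * r + 1) := by
  set K : ℝ := 6 * q * (α + 2) / α with hK
  have hKpos : 0 < K := by positivity
  have hev : ∀ᶠ r : ℕ in atTop, K ≤ (r : ℝ) ^ α :=
    ((tendsto_rpow_atTop hα0).comp tendsto_natCast_atTop_atTop).eventually_ge_atTop K
  filter_upwards [hev, eventually_ge_atTop 1] with r hKr hr1
  have hr1' : (1 : ℝ) ≤ (r : ℝ) := by exact_mod_cast hr1
  have hrpos : (0 : ℝ) < r := by linarith
  -- Step 1: (α r + 1 + α)^(1-α) ≤ (α+2) * r^(1-α)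
  have h1 : (α * r + 1 + α) ^ (1 - α) ≤ (α + 2) * (r : ℝ) ^ (1 - α) := by
    have hb : α * r + 1 + α ≤ (α + 2) * r := by nlinarith
    calc (α * r + 1 + α) ^ (1 - α) ≤ ((α + 2) * r) ^ (1 - α) :=
          Real.rpow_le_rpow (by positivity) hb (by linarith)
      _ = (α + 2) ^ (1 - α) * (r : ℝ) ^ (1 - α) := Real.mul_rpow (by positivity) hrpos.le
      _ ≤ (α + 2) * (r : ℝ) ^ (1 - α) := by
          have : (α + 2) ^ (1 - α) ≤ (α + 2) ^ (1 : ℝ) :=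
            Real.rpow_le_rpow_of_exponent_le (by linarith) (by linarith)
          rw [Real.rpow_one] at this
          exact mul_le_mul_of_nonneg_right this (Real.rpow_nonneg hrpos.le _)
  have hr2 : (r : ℝ) + 2 ≤ 3 * r := by linarith
  have hrw : (r : ℝ) * (r : ℝ) ^ (1 - α) = (r : ℝ) ^ (2 - α) := by
    nth_rewrite 1 [← Real.rpow_one (r:ℝ)]
    rw [← Real.rpow_add hrpos]; ring_nf
  have hrw2 : (r : ℝ) ^ α * (r : ℝ) ^ (2 - α) = (r : ℝ) * (r : ℝ) := by
    rw [← Real.rpow_add hrpos, show α + (2 - α) = ((2:ℕ):ℝ) by push_cast; ring,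
      Real.rpow_natCast]; ring
  calc q * ((r : ℝ) + 2) * (α * r + 1 + α) ^ (1 - α)
      ≤ q * (3 * r) * ((α + 2) * (r : ℝ) ^ (1 - α)) := by
        apply mul_le_mul (by nlinarith) h1 (by positivity) (by positivity)
    _ = 3 * q * (α + 2) * ((r : ℝ) ^ (2 - α)) := by rw [← hrw]; ring
    _ = (α / 2) * K * (r : ℝ) ^ (2 - α) := by rw [hK]; field_simp; ring
    _ ≤ (α / 2) * ((r : ℝ) ^ α) * (r : ℝ) ^ (2 - α) := by
        have := Real.rpow_nonneg hrpos.le (2 - α)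
        nlinarith [mul_le_mul_of_nonneg_right hKr (le_of_lt (by positivity : (0:ℝ) < α/2))]
    _ = (α / 2) * ((r : ℝ) * (r : ℝ)) := by rw [mul_assoc, hrw2]
    _ ≤ (1 / 2) * ((r : ℝ) + 1) * (α * r + 1) := by nlinarith

/-- Summability of the majorant series. -/
lemma sumS {α q : ℝ} (hα0 : 0 < α) (hα1 : α < 1) (hq : 0 < q) :
    Summable (fun r : ℕ => ((r : ℝ) + 1) * q ^ r / Real.Gamma (α * r + 1)) := by
  apply summable_of_ratio_norm_eventually_le (r := 1/2) (by norm_num)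
  filter_upwards [Eineq hα0 hα1 hq] with r hr
  have hΓ1 : 0 < Real.Gamma (α * r + 1) := Real.Gamma_pos_of_pos (by positivity)
  have hΓ2 : 0 < Real.Gamma (α * (r + 1 : ℕ) + 1) := Real.Gamma_pos_of_pos (by positivity)
  rw [Real.norm_eq_abs, Real.norm_eq_abs, abs_of_nonneg (by positivity), abs_of_nonneg (by positivity)]
  have hcast : α * ((r + 1 : ℕ) : ℝ) + 1 = (α * r + 1) + α := by push_cast; ring
  rw [hcast] at hΓ2 ⊢
  have hA := gammaA hα0 hα1 (x := α * r + 1) (by positivity)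
  have hx : (0:ℝ) < α * r + 1 := by positivity
  push_cast
  rw [show (1/2 : ℝ) * (((r:ℝ)+1) * q ^ r / Real.Gamma (α * r + 1))
      = (1/2 * (((r:ℝ)+1) * q ^ r)) / Real.Gamma (α * r + 1) from (mul_div_assoc _ _ _).symm,
    div_le_div_iff₀ hΓ2 hΓ1]
  -- goal : ((r+1)+1) * q^(r+1) * Γ(αr+1) ≤ (1/2 * ((r+1)*q^r)) * Γ(αr+1+α)
  have hpow : (0:ℝ) < (α * r + 1 + α) ^ (1 - α) := Real.rpow_pos_of_pos (by positivity) _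
  have hkey : q * ((r : ℝ) + 2) * (α * r + 1 + α) ^ (1 - α)
      ≤ (1 / 2) * ((r : ℝ) + 1) * (α * r + 1) := hr
  have hmul := mul_le_mul_of_nonneg_right hkey
    (by positivity : (0:ℝ) ≤ q ^ r * Real.Gamma (α * r + 1 + α))
  have hΓle : ((r:ℝ) + 1 + 1) * q ^ (r + 1) * ((α * r + 1) * Real.Gamma (α * r + 1))
      ≤ ((r:ℝ) + 1 + 1) * q ^ (r + 1) * (Real.Gamma (α * r + 1 + α) * (α * r + 1 + α) ^ (1 - α)) :=
    mul_le_mul_of_nonneg_left hA (by positivity)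
  have h2 : ((r:ℝ) + 1 + 1) * q ^ (r + 1) * (Real.Gamma (α * r + 1 + α) * (α * r + 1 + α) ^ (1 - α))
      = (q * ((r : ℝ) + 2) * (α * r + 1 + α) ^ (1 - α)) * (q ^ r * Real.Gamma (α * r + 1 + α)) := by
    ring
  have h3 : ((1 / 2) * ((r : ℝ) + 1) * (α * r + 1)) * (q ^ r * Real.Gamma (α * r + 1 + α))
      = (α * r + 1) * ((1/2 * (((r:ℝ)+1) * q ^ r)) * Real.Gamma (α * r + 1 + α)) := by ring
  have h4 : ((r:ℝ) + 1 + 1) * q ^ (r + 1) * Real.Gamma (α * r + 1)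
      ≤ (1/2 * (((r:ℝ)+1) * q ^ r)) * Real.Gamma (α * r + 1 + α) := by
    rw [← mul_le_mul_iff_right₀ hx, show (α * r + 1) * (((r:ℝ) + 1 + 1) * q ^ (r + 1) * Real.Gamma (α * r + 1))
        = ((r:ℝ) + 1 + 1) * q ^ (r + 1) * ((α * r + 1) * Real.Gamma (α * r + 1)) from by ring, ← h3]
    exact le_trans hΓle (h2 ▸ hmul)
  exact h4

/-- Two-parameter Mittag--Leffler function `E_{β,γ}(w) = ∑_{r≥0} w^r / Γ(βr+γ)`. -/
noncomputable def ml (β γ : ℝ) (w : ℝ) : ℝ :=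
  ∑' r : ℕ, w ^ r / Real.Gamma (β * (r : ℝ) + γ)

/-- Derivative of the Mittag--Leffler survival function:
`d/dt E_{α,1}(−θ t^α) = −θ t^{α−1} E_{α,α}(−θ t^α)` for `t > 0`. -/
theorem stmt_10 (θ α t : ℝ) (hθ : 0 < θ) (hα : α ∈ Set.Ioo (0 : ℝ) 1) (ht : 0 < t) :
    HasDerivAt (fun u : ℝ => ml α 1 (-θ * u ^ α))
      (-θ * t ^ (α - 1) * ml α α (-θ * t ^ α)) t := by
  obtain ⟨hα0, hα1⟩ := hα
  set s : Set ℝ := Set.Ioo (t/2) (2*t) with hs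
  have hs_open : IsOpen s := isOpen_Ioo
  have hs_conn : IsPreconnected s := isPreconnected_Ioo
  have ht_mem : t ∈ s := ⟨by linarith, by linarith⟩
  have hupos : ∀ u ∈ s, 0 < u := fun u hu => lt_trans (by linarith) hu.1
  set q : ℝ := θ * (2*t) ^ α with hqdef
  set C : ℝ := θ * (α * (t/2) ^ (α-1)) with hCdef
  have hq : 0 < q := by
    have : (0:ℝ) < (2*t) ^ α := Real.rpow_pos_of_pos (by linarith) _
    positivity
  have hC : 0 < C := by
    have : (0:ℝ) < (t/2) ^ (α-1) := Real.rpow_pos_of_pos (by linarith) _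
    positivity
  -- the summable majorant for the derivatives
  set v : ℕ → ℝ := fun r => (C/q) * (((r : ℝ) + 1) * q ^ r / Real.Gamma (α * r + 1)) with hv
  have hvsum : Summable v := (sumS hα0 hα1 hq).mul_left _
  -- the terms and their derivatives
  set g : ℕ → ℝ → ℝ := fun r u => (-θ * u ^ α) ^ r / Real.Gamma (α * r + 1) with hg
  set g' : ℕ → ℝ → ℝ := fun r u =>
    ((r : ℝ) * (-θ * u ^ α) ^ (r - 1) * (-θ * (α * u ^ (α-1)))) / Real.Gamma (α * r + 1) with hg'
  have hderiv : ∀ r : ℕ, ∀ u ∈ s, HasDerivAt (g r) (g' r u) u := by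
    intro r u hu
    have h1 : HasDerivAt (fun u : ℝ => u ^ α) (α * u ^ (α-1)) u :=
      Real.hasDerivAt_rpow_const (Or.inl (ne_of_gt (hupos u hu)))
    exact ((h1.const_mul (-θ)).pow r).div_const _
  have hΓpos : ∀ r : ℕ, 0 < Real.Gamma (α * r + 1) :=
    fun r => Real.Gamma_pos_of_pos (by positivity)
  have hbound : ∀ r : ℕ, ∀ u ∈ s, ‖g' r u‖ ≤ v r := by
    intro r u hu
    have hu0 := hupos u hu
    have huα : (0:ℝ) < u ^ α := Real.rpow_pos_of_pos hu0 _
    have h1 : θ * u ^ α ≤ q := by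
      rw [hqdef]
      exact mul_le_mul_of_nonneg_left
        (Real.rpow_le_rpow hu0.le (le_of_lt hu.2) hα0.le) hθ.le
    have h2 : θ * (α * u ^ (α-1)) ≤ C := by
      rw [hCdef]
      have := Real.rpow_le_rpow_of_nonpos (by linarith : (0:ℝ) < t/2) (le_of_lt hu.1)
        (by linarith : α - 1 ≤ 0)
      have := mul_le_mul_of_nonneg_left this hα0.le
      exact mul_le_mul_of_nonneg_left this hθ.le
    have habs : ‖g' r u‖ = (r : ℝ) * (θ * u ^ α) ^ (r - 1) * (θ * (α * u ^ (α-1)))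
        / Real.Gamma (α * r + 1) := by
      rw [hg', Real.norm_eq_abs, abs_div, abs_of_pos (hΓpos r), abs_mul, abs_mul, abs_pow]
      congr 3
      · exact abs_of_nonneg (Nat.cast_nonneg r)
      · rw [abs_mul, abs_neg, abs_of_nonneg hθ.le, abs_of_nonneg huα.le]
      · rw [abs_mul, abs_neg, abs_of_nonneg hθ.le,
          abs_of_nonneg (by positivity : (0:ℝ) ≤ α * u ^ (α-1))]
    rw [habs, hv]
    rcases Nat.eq_zero_or_pos r with hr0 | hrpos
    · subst hr0
      simp only [Nat.cast_zero, zero_mul, zero_div]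
      positivity
    · have hstep : (r : ℝ) * (θ * u ^ α) ^ (r - 1) * (θ * (α * u ^ (α-1)))
          ≤ (C/q) * (((r : ℝ) + 1) * q ^ r) := by
        have hqr : (θ * u ^ α) ^ (r - 1) ≤ q ^ (r - 1) :=
          pow_le_pow_left₀ (by positivity) h1 _
        have hc1 : (r : ℝ) * (θ * u ^ α) ^ (r - 1) * (θ * (α * u ^ (α-1)))
            ≤ (r : ℝ) * q ^ (r - 1) * C := by
          apply mul_le_mul (mul_le_mul_of_nonneg_left hqr (Nat.cast_nonneg r)) h2
            (by positivity) (by positivity)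
        have hc2 : (r : ℝ) * q ^ (r - 1) * C ≤ ((r : ℝ) + 1) * q ^ (r - 1) * C := by
          apply mul_le_mul_of_nonneg_right (mul_le_mul_of_nonneg_right (by linarith)
            (by positivity)) hC.le
        have hc3 : ((r : ℝ) + 1) * q ^ (r - 1) * C = (C/q) * (((r : ℝ) + 1) * q ^ r) := by
          have : q ^ r = q * q ^ (r - 1) := by
            conv_lhs => rw [show r = (r - 1) + 1 from (Nat.succ_pred_eq_of_pos hrpos).symm]
            rw [pow_succ]; ring
          rw [this]; field_simp
        calc _ ≤ (r : ℝ) * q ^ (r - 1) * C := hc1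
          _ ≤ ((r : ℝ) + 1) * q ^ (r - 1) * C := hc2
          _ = _ := hc3
      calc (r : ℝ) * (θ * u ^ α) ^ (r - 1) * (θ * (α * u ^ (α-1))) / Real.Gamma (α * r + 1)
          ≤ (C/q) * (((r : ℝ) + 1) * q ^ r) / Real.Gamma (α * r + 1) := by
            gcongr
        _ = (C/q) * (((r : ℝ) + 1) * q ^ r / Real.Gamma (α * r + 1)) := by ring
  have hsum0 : Summable (fun r => g r t) := by
    apply Summable.of_norm_bounded (sumS hα0 hα1 (q := θ * t ^ α)
      (by positivity : (0:ℝ) < θ * t ^ α))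
    intro r
    have hΓ := hΓpos r
    rw [hg, Real.norm_eq_abs, abs_div, abs_of_pos hΓ, abs_pow, abs_mul, abs_neg,
      abs_of_nonneg hθ.le, abs_of_nonneg (Real.rpow_pos_of_pos ht α).le]
    have : (θ * t ^ α) ^ r ≤ ((r : ℝ) + 1) * (θ * t ^ α) ^ r := by
      nlinarith [pow_nonneg (by positivity : (0:ℝ) ≤ θ * t ^ α) r, (Nat.cast_nonneg r : (0:ℝ) ≤ r)]
    gcongr
  have H := hasDerivAt_tsum_of_isPreconnected hvsum hs_open hs_conn hderiv hbound ht_mem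
    hsum0 ht_mem
  have hml : (fun u : ℝ => ml α 1 (-θ * u ^ α)) = fun u : ℝ => ∑' r : ℕ, g r u := by
    funext u; simp [ml, hg]
  rw [hml]
  refine H.congr_deriv ?_
  -- derivative identity
  have hsum' : Summable (fun r => g' r t) :=
    Summable.of_norm_bounded hvsum (fun r => hbound r t ht_mem)
  rw [Summable.tsum_eq_zero_add hsum']
  have h0 : g' 0 t = 0 := by simp [hg']
  rw [h0, zero_add]
  have hterm : ∀ r : ℕ, g' (r + 1) t
      = (-θ * t ^ (α-1)) * ((-θ * t ^ α) ^ r / Real.Gamma (α * r + α)) := by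
    intro r
    have hne : α * r + α ≠ 0 := by positivity
    have hΓr : Real.Gamma (α * ((r:ℝ) + 1) + 1) = (α * r + α) * Real.Gamma (α * r + α) := by
      rw [show α * ((r:ℝ) + 1) + 1 = (α * r + α) + 1 from by ring, Real.Gamma_add_one hne]
    have hΓr' : (0:ℝ) < Real.Gamma (α * r + α) := Real.Gamma_pos_of_pos (by positivity)
    rw [hg']
    push_cast
    rw [hΓr]
    field_simp
  rw [tsum_congr hterm, tsum_mul_left]
  have : ml α α (-θ * t ^ α) = ∑' r : ℕ, (-θ * t ^ α) ^ r / Real.Gamma (α * r + α) := by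
    simp [ml]
  rw [this]
end
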